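/- Let d ≥ 5 be an integer. Let C = aL + Σ_{i=1}^8 b_iN_i in (ℤL ⊕ N)⊗ℚ with a ∈ (1/2)ℤ, a ≥ 1/2, b_i ∈ (1/2)ℤ, b_i ≤ 0, where L² = 2d, L·N_i = 0, N_i·N_j = -2δ_{ij}. If C·(L - N̂) ≤ 0, where N̂ = (N_1+...+N_8)/2, then C² < -2. -/
import Mathlib


/-- Ampleness computation for `L - N̂` when `L² = 2d ≥ 10`: if
    `C = aL + Σ bᵢNᵢ` with `a, bᵢ ∈ ½ℤ`, `a ≥ ½`, `bᵢ ≤ 0` and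
    `C·(L - N̂) ≤ 0`, then `C² < -2`. -/
theorem ample_L_minus_Nhat (d : ℤ) (hd : 5 ≤ d)
    (a : ℚ) (b : Fin 8 → ℚ)
    (ha2 : ∃ a' : ℤ, a = (a' : ℚ) / 2) (ha : 1/2 ≤ a)
    (hb2 : ∀ i, ∃ m : ℤ, b i = (m : ℚ) / 2) (hb : ∀ i, b i ≤ 0)
    (hneg : 2 * d * a + ∑ i, b i ≤ 0) :
    2 * d * a ^ 2 - 2 * ∑ i, (b i) ^ 2 < -2 := by
  have hcs : (∑ i, b i) ^ 2 ≤ 8 * ∑ i, (b i) ^ 2 := by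
    have := sq_sum_le_card_mul_sum_sq (s := Finset.univ) (f := b)
    simpa using this
  have hd' : (5 : ℚ) ≤ (d : ℚ) := by exact_mod_cast hd
  have ha' : (0 : ℚ) < a := lt_of_lt_of_le (by norm_num) ha
  have hS : ∑ i, b i ≤ 0 := Finset.sum_nonpos fun i _ => hb i
  have h1 : 4 * (d:ℚ)^2 * a^2 ≤ (∑ i, b i)^2 := by
    nlinarith [mul_nonneg (by nlinarith : (0:ℚ) ≤ 2*d*a - ∑ i, b i)
      (by linarith : (0:ℚ) ≤ -(2*d*a + ∑ i, b i))]
  have h2 : (d:ℚ)^2 * a^2 ≤ 2 * ∑ i, (b i)^2 := by linarith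
  have ha4 : (1:ℚ)/4 ≤ a^2 := by nlinarith
  nlinarith [h2, ha4, hd', mul_nonneg (by linarith : (0:ℚ) ≤ (d:ℚ)-5)
    (by linarith : (0:ℚ) ≤ a^2 - 1/4), sq_nonneg ((d:ℚ) - 5), sq_nonneg a]
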